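/- Let T > 0 and let f : [0,T] → ℝ be continuous with f(0) ≥ 0. Define m(t) = max( sup_{0 ≤ s ≤ t} ( −f(s) ), 0 ) and x(t) = f(t) + m(t). Then m is continuous and nondecreasing, m(0) = 0, x(t) ≥ 0 for all t ∈ [0,T], and m is constant on every open subinterval of [0,T] on which x > 0. -/

import Mathlib

open MeasureTheory Set

/-- Existence half of the Skorohod lemma: for continuous `f` with `f 0 ≥ 0`, the function
`m(t) = max (sup_{0 ≤ s ≤ t} (-f s)) 0` is a continuous nondecreasing regulator keeping
`x = f + m` nonnegative, and `m` is flat off the set `{s : x s = 0}`. -/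
theorem skorohod_lemma_existence
    (T : ℝ) (hT : 0 < T) (f : ℝ → ℝ) (hf : ContinuousOn f (Icc 0 T)) (hf0 : 0 ≤ f 0)
    (m x : ℝ → ℝ)
    (hm : ∀ t, m t = max (sSup ((fun s => -(f s)) '' Icc 0 t)) 0)
    (hx : ∀ t, x t = f t + m t) :
    ContinuousOn m (Icc 0 T) ∧ MonotoneOn m (Icc 0 T) ∧ m 0 = 0 ∧
    (∀ t ∈ Icc (0 : ℝ) T, 0 ≤ x t) ∧
    (∀ a b : ℝ, 0 ≤ a → b ≤ T → a < b → (∀ s ∈ Ioo a b, 0 < x s) →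
      ∀ s ∈ Ioo a b, ∀ t ∈ Ioo a b, m s = m t) := by
  have hfneg : ContinuousOn (fun s => -(f s)) (Icc 0 T) := hf.neg
  set S : ℝ → ℝ := fun t => sSup ((fun s => -(f s)) '' Icc 0 t) with hSdef
  have hne : ∀ t : ℝ, 0 ≤ t → ((fun s => -(f s)) '' Icc 0 t).Nonempty := fun t ht =>
    (nonempty_Icc.2 ht).image _
  have hbdd : ∀ t ∈ Icc (0:ℝ) T, BddAbove ((fun s => -(f s)) '' Icc 0 t) := fun t ht =>
    (isCompact_Icc.image_of_continuousOn
      (hfneg.mono (Icc_subset_Icc_right ht.2))).bddAbove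
  have hmemle : ∀ t, t ∈ Icc (0:ℝ) T → ∀ u ∈ Icc (0:ℝ) t, -(f u) ≤ S t := fun t ht u hu =>
    le_csSup (hbdd t ht) (mem_image_of_mem _ hu)
  have hSle : ∀ s t, s ∈ Icc (0:ℝ) T → t ∈ Icc (0:ℝ) T → s ≤ t → S s ≤ S t := by
    intro s t hs ht hst
    exact csSup_le_csSup (hbdd t ht) (hne s hs.1)
      (image_mono (Icc_subset_Icc_right hst))
  have hmS : ∀ t, m t = max (S t) 0 := hm
  have hmnn : ∀ t, 0 ≤ m t := fun t => (hmS t) ▸ le_max_right _ _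
  have hSm : ∀ t, S t ≤ m t := fun t => (hmS t) ▸ le_max_left _ _
  have hmono : MonotoneOn m (Icc 0 T) := by
    intro s hs t ht hst
    rw [hmS s, hmS t]
    exact max_le_max (hSle s t hs ht hst) le_rfl
  have hm0 : m 0 = 0 := by
    have : S 0 = -(f 0) := by
      rw [hSdef]
      simp [Icc_self]
    rw [hmS 0, this, max_eq_right (by linarith)]
  have hxnn : ∀ t ∈ Icc (0:ℝ) T, 0 ≤ x t := by
    intro t ht
    have h1 : -(f t) ≤ S t := hmemle t ht t ⟨ht.1, le_refl t⟩
    have h2 := hSm t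
    rw [hx t]; linarith
  -- key estimate for continuity
  refine ⟨?_, hmono, hm0, hxnn, ?_⟩
  · -- continuity
    obtain ⟨hfUC⟩ : ∃ _ : UniformContinuousOn f (Icc 0 T), True :=
      ⟨isCompact_Icc.uniformContinuousOn_of_continuous hf, trivial⟩
    intro t0 ht0
    rw [Metric.continuousWithinAt_iff]
    intro ε hε
    obtain ⟨δ, hδ, hδf⟩ := (Metric.uniformContinuousOn_iff.1 hfUC) (ε/2) (by linarith)
    refine ⟨δ, hδ, ?_⟩
    have key : ∀ p q : ℝ, p ∈ Icc (0:ℝ) T → q ∈ Icc (0:ℝ) T → p ≤ q → q - p < δ →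
        m q ≤ m p + ε/2 := by
      intro p q hp hq hpq hqp
      rw [hmS q]
      have h0 : (0:ℝ) ≤ m p + ε/2 := by have := hmnn p; linarith
      refine max_le ?_ h0
      refine csSup_le (hne q hq.1) ?_
      rintro y ⟨u, hu, rfl⟩
      by_cases hup : u ≤ p
      · have := hmemle p hp u ⟨hu.1, hup⟩
        have := hSm p
        linarith
      · push_neg at hup
        have huT : u ∈ Icc (0:ℝ) T := ⟨hu.1, hu.2.trans hq.2⟩
        have hdist : dist u p < δ := by
          rw [Real.dist_eq, abs_of_pos (by linarith)]
          linarith [hu.2]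
        have hfu : dist (f u) (f p) < ε/2 := hδf u huT p hp hdist
        rw [Real.dist_eq] at hfu
        have h1 : -(f u) ≤ -(f p) + ε/2 := by
          cases' abs_lt.1 hfu with h2 h3; linarith
        have h2 : -(f p) ≤ S p := hmemle p hp p ⟨hp.1, le_refl p⟩
        have := hSm p
        linarith
    intro t ht hdist
    rw [Real.dist_eq] at hdist
    rw [Real.dist_eq]
    rcases le_total t t0 with h | h
    · have h1 : m t ≤ m t0 := hmono ht ht0 h
      have h2 : m t0 ≤ m t + ε/2 := key t t0 ht ht0 h (by
        cases' abs_lt.1 hdist with h3 h4; linarith)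
      rw [abs_lt]; constructor <;> linarith
    · have h1 : m t0 ≤ m t := hmono ht0 ht h
      have h2 : m t ≤ m t0 + ε/2 := key t0 t ht0 ht h (by
        cases' abs_lt.1 hdist with h3 h4; linarith)
      rw [abs_lt]; constructor <;> linarith
  · -- flatness
    intro a b ha hb hab hpos
    have key : ∀ s t : ℝ, s ∈ Ioo a b → t ∈ Ioo a b → s ≤ t → m t ≤ m s := by
      intro s t hs ht hst
      have hsT : s ∈ Icc (0:ℝ) T := ⟨ha.trans hs.1.le, (hs.2.le.trans hb)⟩
      have htT : t ∈ Icc (0:ℝ) T := ⟨ha.trans ht.1.le, (ht.2.le.trans hb)⟩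
      by_contra hlt
      push_neg at hlt
      have hmt0 : 0 < m t := lt_of_le_of_lt (hmnn s) hlt
      have hmtS : m t = S t := by
        rw [hmS t, max_eq_left]
        by_contra h
        push_neg at h
        rw [hmS t, max_eq_right h.le] at hmt0
        exact lt_irrefl _ hmt0
      -- sup attained
      obtain ⟨u, huI, humax⟩ :=
        isCompact_Icc.exists_isMaxOn (nonempty_Icc.2 htT.1)
          (hfneg.mono (Icc_subset_Icc_right htT.2))
      have hSu : S t = -(f u) := by
        apply le_antisymm
        · exact csSup_le (hne t htT.1) (by rintro y ⟨v, hv, rfl⟩; exact humax hv)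
        · exact hmemle t htT u huI
      by_cases hus : u ≤ s
      · have h1 : -(f u) ≤ S s := hmemle s hsT u ⟨huI.1, hus⟩
        have h2 := hSm s
        rw [hmtS, hSu] at hlt
        linarith
      · push_neg at hus
        have huT : u ∈ Icc (0:ℝ) T := ⟨huI.1, huI.2.trans htT.2⟩
        have huab : u ∈ Ioo a b := ⟨hs.1.trans hus, lt_of_le_of_lt huI.2 ht.2⟩
        have h1 : m u ≤ m t := hmono huT htT huI.2
        have h2 : -(f u) ≤ m u := le_trans (hmemle u huT u ⟨huT.1, le_refl u⟩) (hSm u)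
        have h3 : m u = -(f u) := by rw [hmtS, hSu] at h1; linarith
        have h4 : x u = 0 := by rw [hx u, h3]; ring
        have := hpos u huab
        linarith
    intro s hs t ht
    rcases le_total s t with h | h
    · exact le_antisymm ((hmono ⟨ha.trans hs.1.le, hs.2.le.trans hb⟩
        ⟨ha.trans ht.1.le, ht.2.le.trans hb⟩ h)) (key s t hs ht h)
    · exact le_antisymm (key t s ht hs h) (hmono ⟨ha.trans ht.1.le, ht.2.le.trans hb⟩
        ⟨ha.trans hs.1.le, hs.2.le.trans hb⟩ h)
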